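/- arXiv:1704.07408 — 3 statements merged into one kernel-verified Lean document; each statement's English description precedes it below -/
import Mathlib

section
/- Let H be a normal subgroup of π₁(X, x₀). If the inversion map [α]_H ↦ [α⁻¹]_H on the fiber (p_H⁻¹(x₀))^wh is continuous, then (p_H⁻¹(x₀))^wh is a topological group (i.e., the concatenation map ([α]_H, [β]_H) ↦ [α⋆β]_H is also continuous). -/
open Set TopologicalSpace unitInterval

universe u

namespace SLTF

attribute [local instance] Path.Homotopic.setoid

variable {X : Type u} [TopologicalSpace X]

/-- The homotopy class of a loop as an element of the fundamental group. -/
noncomputable def fl {x : X} (γ : Path x x) : FundamentalGroup X x :=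
  @FundamentalGroup.fromPath X _ x ⟦γ⟧

/-- Multiplication of fundamental-group elements in path-concatenation order:
`pmul a b` is the class of "`a` followed by `b`". -/
noncomputable def pmul {x : X} (a b : FundamentalGroup X x) : FundamentalGroup X x :=
  @FundamentalGroup.fromPath X _ x
    (Path.Homotopic.Quotient.trans (@FundamentalGroup.toPath X _ x a)
      (@FundamentalGroup.toPath X _ x b))

/-- A path in `X` starting at the base point `x`, recorded together with its end point. -/
structure PPath (X : Type u) [TopologicalSpace X] (x : X) where
  target : X
  path : Path x target

/-- Two paths starting at `x` are identified when they have the same end point and the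
class of `α ⬝ β⁻¹` satisfies the predicate `P` (e.g. membership in a subgroup `H`). -/
def HRel (x : X) (P : Path x x → Prop) (α β : PPath X x) : Prop :=
  ∃ h : α.target = β.target, P (α.path.trans ((β.path.cast rfl h).symm))

/-- The set `X̃` of `P`-equivalence classes of paths starting at `x`. -/
def Xtilde (x : X) (P : Path x x → Prop) : Type u := Quot (HRel x P)

/-- The class of a path in `X̃`. -/
def mkX (x : X) (P : Path x x → Prop) (α : PPath X x) : Xtilde x P := Quot.mk _ α

/-- The basic whisker-open set `([α], U)`: all classes of prolongations of `α` by a path in `U`. -/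
def whBasic (x : X) (P : Path x x → Prop) (α : PPath X x) (U : Set X) : Set (Xtilde x P) :=
  { q | ∃ (y : X) (β : Path α.target y), range ⇑β ⊆ U ∧ q = mkX x P ⟨y, α.path.trans β⟩ }

/-- The whisker topology on `X̃`, generated by the sets `([α], U)` for `U` an open
neighbourhood of the end point of `α`. -/
instance whTop (x : X) (P : Path x x → Prop) : TopologicalSpace (Xtilde x P) :=
  generateFrom
    { S | ∃ (α : PPath X x) (U : Set X), IsOpen U ∧ α.target ∈ U ∧ S = whBasic x P α U }

/-- The endpoint projection `p : X̃ → X`. -/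
def endpt (x : X) (P : Path x x → Prop) : Xtilde x P → X :=
  Quot.lift (fun α => α.target) (fun _ _ h => h.elim fun e _ => e)

/-- The space of paths in `X` starting at `x`, with the compact-open topology. -/
def PSp (X : Type u) [TopologicalSpace X] (x : X) : Type u := { f : C(I, X) // f 0 = x }

instance (x : X) : TopologicalSpace (PSp X x) := instTopologicalSpaceSubtype

/-- The natural surjection from the path space onto `X̃`. -/
def toXt (x : X) (P : Path x x → Prop) : PSp X x → Xtilde x P :=
  fun f => mkX x P ⟨f.1 1, ⟨f.1, f.2, rfl⟩⟩

/-- The quotient of the compact-open topology on `X̃`. -/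
def topTop (x : X) (P : Path x x → Prop) : TopologicalSpace (Xtilde x P) :=
  coinduced (toXt x P) inferInstance

/-- Membership in a subgroup `H`, as a predicate on loops. -/
noncomputable def loopMem (x : X) (H : Subgroup (FundamentalGroup X x)) : Path x x → Prop :=
  fun γ => fl γ ∈ H

/-- `X̃_H`, the classes of paths starting at `x₀` modulo `H`. -/
abbrev XtildeH (x₀ : X) (H : Subgroup (FundamentalGroup X x₀)) : Type u :=
  Xtilde x₀ (loopMem x₀ H)

/-- The fiber of the endpoint projection over `y`, with the subspace (whisker) topology. -/
abbrev Fib (x : X) (P : Path x x → Prop) (y : X) : Type u :=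
  { q : Xtilde x P // endpt x P q = y }

/-- The class in the fiber over `y` of a path from `x` to `y`. -/
def mkFib (x : X) (P : Path x x → Prop) {y : X} (δ : Path x y) : Fib x P y :=
  ⟨mkX x P ⟨y, δ⟩, rfl⟩

/-- The whisker topology on the fundamental group `π₁(X, x)`: basic neighbourhoods of `a`
are the sets `{a ⋆ [γ] : γ a loop in U at x}` for `U` an open neighbourhood of `x`. -/
noncomputable def whPi1 (x : X) : TopologicalSpace (FundamentalGroup X x) :=
  generateFrom
    { S | ∃ (a : FundamentalGroup X x) (U : Set X), IsOpen U ∧ x ∈ U ∧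
        S = { b | ∃ γ : Path x x, range ⇑γ ⊆ U ∧ b = pmul a (fl γ) } }

/-- The quotient topology on `π₁(X, x)` induced from the loop space with the
compact-open topology. -/
noncomputable def qtopPi1 (x : X) : TopologicalSpace (FundamentalGroup X x) :=
  coinduced (fun γ : Path x x => fl γ) inferInstance

/-- `X` is `H`-SLT at `x₀`. -/
noncomputable def IsHSLTAt (x₀ : X) (H : Subgroup (FundamentalGroup X x₀)) : Prop :=
  ∀ (y : X) (α : Path x₀ y) (U : Set X), IsOpen U → x₀ ∈ U →
    ∃ V : Set X, IsOpen V ∧ y ∈ V ∧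
      ∀ β : Path y y, range ⇑β ⊆ V →
        ∃ γ : Path x₀ x₀, range ⇑γ ⊆ U ∧
          fl ((α.trans (β.trans α.symm)).trans γ.symm) ∈ H

/-- `X` is SLT at `x`. -/
def IsSLTAt (X : Type u) [TopologicalSpace X] (x : X) : Prop :=
  ∀ (y : X) (α : Path x y) (U : Set X), IsOpen U → x ∈ U →
    ∃ V : Set X, IsOpen V ∧ y ∈ V ∧
      ∀ β : Path y y, range ⇑β ⊆ V →
        ∃ γ : Path x x, range ⇑γ ⊆ U ∧ (α.trans (β.trans α.symm)).Homotopic γ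

/-- `X` is an SLT space. -/
def IsSLT (X : Type u) [TopologicalSpace X] : Prop := ∀ x : X, IsSLTAt X x

/-- `α` (a path from `x` to `y`) is an `H`-SLT path: for every path `lam` from `x₀` to `x`
and open `U ∋ x` there is an open `V ∋ y` such that every loop `β` in `V` at `y` transfers
to a loop `γ` in `U` at `x` with `[α ⋆ β ⋆ α⁻¹ ⋆ γ⁻¹] ∈ [lam⁻¹ H lam]`, i.e.
`[lam ⋆ (α ⋆ β ⋆ α⁻¹ ⋆ γ⁻¹) ⋆ lam⁻¹] ∈ H`. -/
noncomputable def IsHSLTPath (x₀ : X) (H : Subgroup (FundamentalGroup X x₀)) {x y : X}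
    (α : Path x y) : Prop :=
  ∀ (lam : Path x₀ x) (U : Set X), IsOpen U → x ∈ U →
    ∃ V : Set X, IsOpen V ∧ y ∈ V ∧
      ∀ β : Path y y, range ⇑β ⊆ V →
        ∃ γ : Path x x, range ⇑γ ⊆ U ∧
          fl (lam.trans ((((α.trans (β.trans α.symm)).trans γ.symm)).trans lam.symm)) ∈ H

/-- `X` is an `H`-SLT space: for every `x` and every path `lam` from `x₀` to `x`, `X` is
`[lam⁻¹ H lam]`-SLT at `x`. -/
noncomputable def IsHSLTSpace (x₀ : X) (H : Subgroup (FundamentalGroup X x₀)) : Prop :=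
  ∀ (x y : X) (α : Path x y), IsHSLTPath x₀ H α

/-- Membership in the conjugate subgroup `[lam⁻¹ H lam]` of `π₁(X, x)`,
as a predicate on loops at `x`. -/
noncomputable def conjMem (x₀ : X) (H : Subgroup (FundamentalGroup X x₀)) {x : X}
    (lam : Path x₀ x) : Path x x → Prop :=
  fun δ => fl (lam.trans (δ.trans lam.symm)) ∈ H

/-- `X` is homotopically Hausdorff relative to `H`. -/
noncomputable def HomHausdorffRel (x₀ : X) (H : Subgroup (FundamentalGroup X x₀)) : Prop :=
  ∀ (y : X) (α : Path x₀ y) (g : FundamentalGroup X x₀), g ∉ H →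
    ∃ U : Set X, IsOpen U ∧ y ∈ U ∧
      ∀ γ : Path y y, range ⇑γ ⊆ U →
        ¬ ∃ h ∈ H, fl (α.trans (γ.trans α.symm)) = pmul h g

/-- `X` is homotopically path Hausdorff relative to `H`. -/
noncomputable def HomPathHausdorffRel (x₀ : X) (H : Subgroup (FundamentalGroup X x₀)) : Prop :=
  ∀ (y : X) (α β : Path x₀ y), fl (α.trans β.symm) ∉ H →
    ∃ (n : ℕ) (t : Fin (n + 1) → I) (U : Fin n → Set X),
      t 0 = 0 ∧ t (Fin.last n) = 1 ∧ StrictMono t ∧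
      (∀ i : Fin n, IsOpen (U i)) ∧
      (∀ i : Fin n, ⇑α '' Set.Icc (t i.castSucc) (t i.succ) ⊆ U i) ∧
      ∀ γ : Path x₀ y,
        (∀ i : Fin n, ⇑γ '' Set.Icc (t i.castSucc) (t i.succ) ⊆ U i) →
        (∀ i : Fin (n + 1), γ (t i) = α (t i)) →
        fl (γ.trans β.symm) ∉ H

/-- The endpoint projection `p : X̃ → X` (with the whisker topology on `X̃`) has the
unique path lifting property. -/
def UPLP (x : X) (P : Path x x → Prop) : Prop :=
  ∀ g₁ g₂ : C(I, Xtilde x P), g₁ 0 = g₂ 0 →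
    (∀ t, endpt x P (g₁ t) = endpt x P (g₂ t)) → g₁ = g₂

/-- A semicovering map: a local homeomorphism with (continuous) unique lifting of paths
and of homotopies. -/
structure IsSemicovering {Y : Type u} [TopologicalSpace Y] (p : Y → X) : Prop where
  localHomeo : IsLocalHomeomorph p
  pathLift : ∀ (y : Y) (γ : C(I, X)), γ 0 = p y →
    ∃! γh : C(I, Y), γh 0 = y ∧ ∀ t, p (γh t) = γ t
  contPathLift : ∀ y : Y, ∃ L : { γ : C(I, X) // γ 0 = p y } → C(I, Y),
    Continuous L ∧ ∀ γ, (L γ) 0 = y ∧ ∀ t, p ((L γ) t) = (γ : C(I, X)) t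
  homotopyLift : ∀ (y : Y) (Φ : C(I × I, X)), Φ (0, 0) = p y →
    ∃! Φh : C(I × I, Y), Φh (0, 0) = y ∧ ∀ z, p (Φh z) = Φ z
  contHomotopyLift : ∀ y : Y, ∃ L : { Φ : C(I × I, X) // Φ (0, 0) = p y } → C(I × I, Y),
    Continuous L ∧ ∀ Φ, (L Φ) (0, 0) = y ∧ ∀ z, p ((L Φ) z) = (Φ : C(I × I, X)) z

/-- An `lpc₀`-covering map with `p₊π₁(Y, ·) = H`: a map which is equivalent, as a map
over `X`, to the endpoint projection `p_H : X̃_H → X` having the unique path lifting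
property (with `Y` path connected and locally path connected). -/
structure IsLpc0Covering {Y : Type u} [TopologicalSpace Y] (p : Y → X) (x₀ : X)
    (H : Subgroup (FundamentalGroup X x₀)) : Prop where
  pathConnected : PathConnectedSpace Y
  locPathConnected : LocPathConnectedSpace Y
  uplp : UPLP x₀ (loopMem x₀ H)
  equiv : ∃ φ : Y ≃ₜ XtildeH x₀ H, ∀ y, endpt x₀ (loopMem x₀ H) (φ y) = p y

/-- The homomorphism induced by `p` on fundamental groups, as a function. -/
noncomputable def pStar {Y : Type u} [TopologicalSpace Y] (p : C(Y, X)) (y₀ : Y) :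
    FundamentalGroup Y y₀ → FundamentalGroup X (p y₀) :=
  fun g => @FundamentalGroup.fromPath X _ (p y₀)
    (Path.Homotopic.Quotient.map (@FundamentalGroup.toPath Y _ y₀ g) p)

set_option linter.dupNamespace false
section Aux
variable {x₀ : X} {H : Subgroup (FundamentalGroup X x₀)}

lemma fl_trans (a b : Path x₀ x₀) : fl (a.trans b) = fl b * fl a :=
  rfl

lemma fl_symm (a : Path x₀ x₀) : fl a.symm = (fl a)⁻¹ :=
  rfl

lemma fl_refl : fl (Path.refl x₀) = 1 :=
  rfl

lemma fl_homotopic {a b : Path x₀ x₀} (h : a.Homotopic b) : fl a = fl b :=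
  congrArg (fun q => @FundamentalGroup.fromPath X _ x₀ q) (Quotient.sound h)

lemma mkFib_eq_of {a b : Path x₀ x₀} (h : fl (a.trans b.symm) ∈ H) :
    mkFib x₀ (loopMem x₀ H) a = mkFib x₀ (loopMem x₀ H) b :=
  Subtype.ext (Quot.sound ⟨rfl, h⟩)

lemma mkFib_homotopic {a b : Path x₀ x₀} (h : a.Homotopic b) :
    mkFib x₀ (loopMem x₀ H) a = mkFib x₀ (loopMem x₀ H) b := by
  apply mkFib_eq_of
  have h1 : fl (a.trans b.symm) = (fl b)⁻¹ * fl a := by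
    simp only [fl_trans, fl_symm]
  rw [h1, fl_homotopic h, inv_mul_cancel]
  exact one_mem H

lemma mkX_inj {a b : Path x₀ x₀}
    (h : mkX x₀ (loopMem x₀ H) ⟨x₀, a⟩ = mkX x₀ (loopMem x₀ H) ⟨x₀, b⟩) :
    fl (a.trans b.symm) ∈ H := by
  classical
  let f : PPath X x₀ → Prop := fun α =>
    ∃ ht : α.target = x₀, fl (a.trans ((α.path.cast rfl ht.symm).symm)) ∈ H
  have hf : ∀ α β, HRel x₀ (loopMem x₀ H) α β → f α = f β := by
    rintro ⟨t, p⟩ ⟨s, q⟩ ⟨e, hP⟩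
    dsimp only at e
    subst e
    have hP' : fl (p.trans q.symm) ∈ H := hP
    apply propext
    constructor
    · rintro ⟨ht, hh⟩
      dsimp only at ht hh ⊢
      subst ht
      refine ⟨rfl, ?_⟩
      have hh' : fl (a.trans p.symm) ∈ H := hh
      have key : fl (a.trans q.symm) = fl (p.trans q.symm) * fl (a.trans p.symm) := by
        simp only [fl_trans, fl_symm]; group
      show fl (a.trans q.symm) ∈ H
      rw [key]; exact mul_mem hP' hh'
    · rintro ⟨ht, hh⟩
      dsimp only at ht hh ⊢
      subst ht
      refine ⟨rfl, ?_⟩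
      have hh' : fl (a.trans q.symm) ∈ H := hh
      have key : fl (a.trans p.symm) = (fl (p.trans q.symm))⁻¹ * fl (a.trans q.symm) := by
        simp only [fl_trans, fl_symm]; group
      show fl (a.trans p.symm) ∈ H
      rw [key]; exact mul_mem (inv_mem hP') hh'
  have base : Quot.lift f hf (mkX x₀ (loopMem x₀ H) ⟨x₀, a⟩) := by
    refine ⟨rfl, ?_⟩
    have key : fl (a.trans a.symm) = 1 := by simp only [fl_trans, fl_symm]; group
    show fl (a.trans a.symm) ∈ H
    rw [key]; exact one_mem H
  have final : Quot.lift f hf (mkX x₀ (loopMem x₀ H) ⟨x₀, b⟩) := h ▸ base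
  obtain ⟨ht, hh⟩ := final
  exact hh

lemma mkFib_inj {a b : Path x₀ x₀}
    (h : mkFib x₀ (loopMem x₀ H) a = mkFib x₀ (loopMem x₀ H) b) :
    fl (a.trans b.symm) ∈ H :=
  mkX_inj (congrArg Subtype.val h)

end Aux
section Aux2
variable {x₀ : X} {H : Subgroup (FundamentalGroup X x₀)}

/-- Basic whisker neighbourhood in the fiber, based at a loop. -/
def Bset (x₀ : X) (H : Subgroup (FundamentalGroup X x₀)) (γ : Path x₀ x₀) (U : Set X) :
    Set (Fib x₀ (loopMem x₀ H) x₀) :=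
  Subtype.val ⁻¹' whBasic x₀ (loopMem x₀ H) ⟨x₀, γ⟩ U

lemma isOpen_Bset {γ : Path x₀ x₀} {U : Set X} (hU : IsOpen U) (hx : x₀ ∈ U) :
    IsOpen (Bset x₀ H γ U) := by
  apply IsOpen.preimage continuous_subtype_val
  exact TopologicalSpace.GenerateOpen.basic _ ⟨⟨x₀, γ⟩, U, hU, hx, rfl⟩

lemma mem_Bset_iff {γ : Path x₀ x₀} {U : Set X} {q : Fib x₀ (loopMem x₀ H) x₀} :
    q ∈ Bset x₀ H γ U ↔
      ∃ β : Path x₀ x₀, range ⇑β ⊆ U ∧ q = mkFib x₀ (loopMem x₀ H) (γ.trans β) := by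
  constructor
  · rintro ⟨y, β, hr, he⟩
    have hy : y = x₀ := by
      have h2 := q.2
      rw [he] at h2
      exact h2
    subst hy
    exact ⟨β, hr, Subtype.ext he⟩
  · rintro ⟨β, hr, rfl⟩
    exact ⟨x₀, β, hr, rfl⟩

lemma mem_Bset_self {γ : Path x₀ x₀} {U : Set X} (hx : x₀ ∈ U) :
    mkFib x₀ (loopMem x₀ H) γ ∈ Bset x₀ H γ U := by
  rw [mem_Bset_iff]
  refine ⟨Path.refl x₀, by rw [Path.refl_range]; exact singleton_subset_iff.2 hx, ?_⟩
  exact (mkFib_homotopic (⟨Path.Homotopy.transRefl γ⟩ : (γ.trans (Path.refl x₀)).Homotopic γ)).symm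

lemma fib_surj (q : Fib x₀ (loopMem x₀ H) x₀) :
    ∃ γ : Path x₀ x₀, q = mkFib x₀ (loopMem x₀ H) γ := by
  obtain ⟨q, hq⟩ := q
  revert hq
  induction q using Quot.ind with
  | _ α =>
    obtain ⟨y, δ⟩ := α
    intro hq
    have hy : y = x₀ := hq
    subst y
    exact ⟨δ, rfl⟩

lemma exists_Bset_subset {S : Set (Fib x₀ (loopMem x₀ H) x₀)} (hS : IsOpen S)
    {γ : Path x₀ x₀} (hγ : mkFib x₀ (loopMem x₀ H) γ ∈ S) :
    ∃ U : Set X, IsOpen U ∧ x₀ ∈ U ∧ Bset x₀ H γ U ⊆ S := by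
  rw [isOpen_induced_iff] at hS
  obtain ⟨T, hT, rfl⟩ := hS
  have hT' : TopologicalSpace.GenerateOpen
      { S | ∃ (α : PPath X x₀) (U : Set X), IsOpen U ∧ α.target ∈ U ∧
          S = whBasic x₀ (loopMem x₀ H) α U } T := hT
  clear hT
  -- strengthen: prove by induction over GenerateOpen
  have main : ∀ T, TopologicalSpace.GenerateOpen
      { S | ∃ (α : PPath X x₀) (U : Set X), IsOpen U ∧ α.target ∈ U ∧
          S = whBasic x₀ (loopMem x₀ H) α U } T →
      ∀ γ : Path x₀ x₀, mkX x₀ (loopMem x₀ H) ⟨x₀, γ⟩ ∈ T →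
      ∃ U : Set X, IsOpen U ∧ x₀ ∈ U ∧
        ∀ δ : Path x₀ x₀, range ⇑δ ⊆ U → mkX x₀ (loopMem x₀ H) ⟨x₀, γ.trans δ⟩ ∈ T := by
    intro T hT
    induction hT with
    | basic S hSmem =>
      obtain ⟨α, U', hU', hαU', rfl⟩ := hSmem
      intro γ hγ
      obtain ⟨y, β, hr, he⟩ := hγ
      have hy : y = x₀ := by
        have := congrArg (endpt x₀ (loopMem x₀ H)) he
        exact this.symm
      subst y
      have heq : mkFib x₀ (loopMem x₀ H) γ = mkFib x₀ (loopMem x₀ H) (α.path.trans β) :=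
        Subtype.ext he
      have hkey := mkFib_inj heq
      refine ⟨U', hU', hr ⟨1, β.target⟩, ?_⟩
      intro δ hδ
      refine ⟨x₀, β.trans δ, by rw [Path.trans_range]; exact union_subset hr hδ, ?_⟩
      -- mkX ⟨x₀, γ.trans δ⟩ = mkX ⟨x₀, α.path.trans (β.trans δ)⟩
      have hhom : ((α.path.trans β).trans δ).Homotopic (α.path.trans (β.trans δ)) :=
        ⟨Path.Homotopy.transAssoc α.path β δ⟩
      have e1 : mkFib x₀ (loopMem x₀ H) (γ.trans δ) =
          mkFib x₀ (loopMem x₀ H) ((α.path.trans β).trans δ) := by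
        apply mkFib_eq_of
        have key : fl ((γ.trans δ).trans (((α.path.trans β).trans δ).symm)) =
            ((fl δ * fl (α.path.trans β))⁻¹) * (fl δ * fl γ) := by
          simp only [fl_trans, fl_symm]
        have key2 : ((fl δ * fl (α.path.trans β))⁻¹) * (fl δ * fl γ) =
            (fl (α.path.trans β))⁻¹ * fl γ := by group
        have key3 : fl (γ.trans (α.path.trans β).symm) =
            (fl (α.path.trans β))⁻¹ * fl γ := by simp only [fl_trans, fl_symm]
        rw [key, key2, ← key3]
        exact hkey
      have e2 : mkFib x₀ (loopMem x₀ H) ((α.path.trans β).trans δ) =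
          mkFib x₀ (loopMem x₀ H) (α.path.trans (β.trans δ)) :=
        mkFib_homotopic hhom
      have := e1.trans e2
      exact congrArg Subtype.val this
    | univ => intro γ _; exact ⟨univ, isOpen_univ, mem_univ _, fun δ _ => mem_univ _⟩
    | inter S₁ S₂ _ _ ih₁ ih₂ =>
      intro γ hγ
      obtain ⟨U₁, hU₁, hx₁, h₁⟩ := ih₁ γ hγ.1
      obtain ⟨U₂, hU₂, hx₂, h₂⟩ := ih₂ γ hγ.2
      exact ⟨U₁ ∩ U₂, hU₁.inter hU₂, ⟨hx₁, hx₂⟩, fun δ hδ =>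
        ⟨h₁ δ (hδ.trans inter_subset_left), h₂ δ (hδ.trans inter_subset_right)⟩⟩
    | sUnion 𝒮 _ ih =>
      intro γ hγ
      obtain ⟨T₀, hT₀, hmem⟩ := hγ
      obtain ⟨U, hU, hx, h⟩ := ih T₀ hT₀ γ hmem
      exact ⟨U, hU, hx, fun δ hδ => ⟨T₀, hT₀, h δ hδ⟩⟩
  obtain ⟨U, hU, hx, h⟩ := main T hT' γ hγ
  refine ⟨U, hU, hx, ?_⟩
  intro q hq
  rw [mem_Bset_iff] at hq
  obtain ⟨δ, hδ, rfl⟩ := hq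
  exact h δ hδ

lemma isOpen_of_forall_Bset {S : Set (Fib x₀ (loopMem x₀ H) x₀)}
    (h : ∀ q ∈ S, ∃ (γ : Path x₀ x₀) (U : Set X), IsOpen U ∧ x₀ ∈ U ∧
      q = mkFib x₀ (loopMem x₀ H) γ ∧ Bset x₀ H γ U ⊆ S) : IsOpen S := by
  rw [isOpen_iff_forall_mem_open]
  intro q hq
  obtain ⟨γ, U, hU, hx, rfl, hsub⟩ := h q hq
  exact ⟨Bset x₀ H γ U, hsub, isOpen_Bset hU hx, mem_Bset_self hx⟩

end Aux2
section Aux3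
variable {x₀ : X} {H : Subgroup (FundamentalGroup X x₀)}

lemma continuous_lmul
    (mul : Fib x₀ (loopMem x₀ H) x₀ → Fib x₀ (loopMem x₀ H) x₀ → Fib x₀ (loopMem x₀ H) x₀)
    (hmul : ∀ a b : Path x₀ x₀,
      mul (mkFib x₀ (loopMem x₀ H) a) (mkFib x₀ (loopMem x₀ H) b) =
        mkFib x₀ (loopMem x₀ H) (a.trans b))
    (c : Path x₀ x₀) : Continuous (fun q => mul (mkFib x₀ (loopMem x₀ H) c) q) := by
  rw [continuous_def]
  intro S hS
  apply isOpen_of_forall_Bset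
  intro q hq
  obtain ⟨γ, rfl⟩ := fib_surj q
  have hq' : mkFib x₀ (loopMem x₀ H) (c.trans γ) ∈ S := by rw [← hmul]; exact hq
  obtain ⟨U, hU, hx, hsub⟩ := exists_Bset_subset hS hq'
  refine ⟨γ, U, hU, hx, rfl, ?_⟩
  intro q' hq'
  rw [mem_Bset_iff] at hq'
  obtain ⟨δ, hδ, rfl⟩ := hq'
  show mul _ (mkFib x₀ (loopMem x₀ H) (γ.trans δ)) ∈ S
  rw [hmul]
  apply hsub
  rw [mem_Bset_iff]
  exact ⟨δ, hδ, mkFib_homotopic (Path.Homotopic.symm ⟨Path.Homotopy.transAssoc c γ δ⟩)⟩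

end Aux3

/-- Let `H` be a normal subgroup of `π₁(X, x₀)`. If the inversion map
`[α]_H ↦ [α⁻¹]_H` on the fiber `(p_H⁻¹(x₀))^wh` is continuous, then this fiber is a
topological group, i.e. the concatenation map `([α]_H, [β]_H) ↦ [α⋆β]_H` is also continuous. -/
theorem statement0 {X : Type u} [TopologicalSpace X] [PathConnectedSpace X] (x₀ : X)
    (H : Subgroup (FundamentalGroup X x₀)) (hH : H.Normal)
    (inv : Fib x₀ (loopMem x₀ H) x₀ → Fib x₀ (loopMem x₀ H) x₀)
    (hinv : ∀ γ : Path x₀ x₀,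
      inv (mkFib x₀ (loopMem x₀ H) γ) = mkFib x₀ (loopMem x₀ H) γ.symm)
    (hinvc : Continuous inv)
    (mul : Fib x₀ (loopMem x₀ H) x₀ → Fib x₀ (loopMem x₀ H) x₀ → Fib x₀ (loopMem x₀ H) x₀)
    (hmul : ∀ a b : Path x₀ x₀,
      mul (mkFib x₀ (loopMem x₀ H) a) (mkFib x₀ (loopMem x₀ H) b) =
        mkFib x₀ (loopMem x₀ H) (a.trans b)) :
    Continuous fun q : Fib x₀ (loopMem x₀ H) x₀ × Fib x₀ (loopMem x₀ H) x₀ =>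
      mul q.1 q.2 := by
  rw [continuous_def]
  intro S hS
  rw [isOpen_prod_iff]
  intro qa qb hmem
  obtain ⟨a, rfl⟩ := fib_surj qa
  obtain ⟨b, rfl⟩ := fib_surj qb
  have hmem' : mkFib x₀ (loopMem x₀ H) (a.trans b) ∈ S := by
    rw [← hmul]; exact hmem
  obtain ⟨U, hU, hxU, hUS⟩ := exists_Bset_subset hS hmem'
  have hL : Continuous (fun q => mul (mkFib x₀ (loopMem x₀ H) b.symm) q) :=
    continuous_lmul mul hmul b.symm
  set T : Fib x₀ (loopMem x₀ H) x₀ → Fib x₀ (loopMem x₀ H) x₀ :=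
    fun q => inv (mul (mkFib x₀ (loopMem x₀ H) b.symm)
      (inv (mul (mkFib x₀ (loopMem x₀ H) b.symm) q))) with hTdef
  have hTc : Continuous T := hinvc.comp (hL.comp (hinvc.comp hL))
  have hTval : ∀ β : Path x₀ x₀, T (mkFib x₀ (loopMem x₀ H) β) =
      mkFib x₀ (loopMem x₀ H) ((b.symm.trans ((b.symm.trans β).symm)).symm) := by
    intro β
    rw [hTdef]
    simp only
    rw [hmul, hinv, hmul, hinv]
  have hT0 : T (mkFib x₀ (loopMem x₀ H) (Path.refl x₀)) ∈
      Bset x₀ H (Path.refl x₀) U := by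
    rw [hTval, mem_Bset_iff]
    refine ⟨Path.refl x₀, by rw [Path.refl_range]; exact singleton_subset_iff.2 hxU, ?_⟩
    apply mkFib_eq_of
    have key : fl (((b.symm.trans ((b.symm.trans (Path.refl x₀)).symm)).symm).trans
        (((Path.refl x₀).trans (Path.refl x₀)).symm)) = 1 := by
      simp only [fl_trans, fl_symm, fl_refl]; group
    rw [key]; exact one_mem H
  have hpre : IsOpen (T ⁻¹' Bset x₀ H (Path.refl x₀) U) :=
    (isOpen_Bset hU hxU).preimage hTc
  obtain ⟨W, hW, hxW, hWsub⟩ := exists_Bset_subset hpre hT0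
  have keyW : ∀ β : Path x₀ x₀, range ⇑β ⊆ W → ∃ ε : Path x₀ x₀, range ⇑ε ⊆ U ∧
      fl (((b.symm.trans ((b.symm.trans β).symm)).symm).trans
        (((Path.refl x₀).trans ε).symm)) ∈ H := by
    intro β hβ
    have h1 : mkFib x₀ (loopMem x₀ H) ((Path.refl x₀).trans β) ∈
        Bset x₀ H (Path.refl x₀) W := mem_Bset_iff.2 ⟨β, hβ, rfl⟩
    rw [mkFib_homotopic (⟨Path.Homotopy.reflTrans β⟩ :
      ((Path.refl x₀).trans β).Homotopic β)] at h1
    have h3 := hWsub h1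
    rw [mem_preimage, hTval, mem_Bset_iff] at h3
    obtain ⟨ε, hε, heq⟩ := h3
    exact ⟨ε, hε, mkFib_inj heq⟩
  refine ⟨Bset x₀ H a W, Bset x₀ H b U, isOpen_Bset hW hxW, isOpen_Bset hU hxU,
    mem_Bset_self hxW, mem_Bset_self hxU, ?_⟩
  rintro ⟨q1, q2⟩ ⟨hq1, hq2⟩
  rw [mem_Bset_iff] at hq1 hq2
  obtain ⟨β, hβ, rfl⟩ := hq1
  obtain ⟨δ, hδ, rfl⟩ := hq2
  obtain ⟨ε, hε, hkey⟩ := keyW β hβ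
  show mul (mkFib x₀ (loopMem x₀ H) (a.trans β)) (mkFib x₀ (loopMem x₀ H) (b.trans δ)) ∈ S
  rw [hmul]
  apply hUS
  rw [mem_Bset_iff]
  refine ⟨ε.trans δ, by rw [Path.trans_range]; exact union_subset hε hδ, ?_⟩
  apply mkFib_eq_of
  have key : fl (((a.trans β).trans (b.trans δ)).trans
      (((a.trans b).trans (ε.trans δ)).symm)) =
      ((fl b * fl a)⁻¹) *
        fl (((b.symm.trans ((b.symm.trans β).symm)).symm).trans
          (((Path.refl x₀).trans ε).symm)) * ((fl b * fl a)⁻¹)⁻¹ := by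
    simp only [fl_trans, fl_symm, fl_refl]; group
  rw [key]
  exact hH.conj_mem _ hkey _

end SLTF
end

section
/- Let H be a normal subgroup of π₁(X, x₀) and let X be H-SLT at x₀. Then the fiber (p_H⁻¹(x₀))^wh is a topological group. -/
open Set TopologicalSpace unitInterval

universe u

namespace SLTF

attribute [local instance] Path.Homotopic.setoid

variable {X : Type u} [TopologicalSpace X]

section Aux

open CategoryTheory

/-- A path class as a morphism in the fundamental groupoid. -/
def auxPq {x y : X} (p : Path x y) :
    FundamentalGroupoid.mk x ⟶ FundamentalGroupoid.mk y := ⟦p⟧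

lemma auxPq_trans {x y z : X} (p : Path x y) (q : Path y z) :
    auxPq (p.trans q) = auxPq p ≫ auxPq q :=
  rfl

lemma auxPq_symm {x y : X} (p : Path x y) :
    auxPq p.symm = Groupoid.inv (auxPq p) := rfl

lemma aux_fl_hom {x : X} (γ : Path x x) :
    (fl γ : FundamentalGroupoid.mk x ⟶ FundamentalGroupoid.mk x) = auxPq γ := rfl

lemma aux_fl_trans {x : X} (p q : Path x x) : fl (p.trans q) = fl q * fl p := by
  rfl

lemma aux_fl_symm {x : X} (p : Path x x) : fl p.symm = (fl p)⁻¹ := by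
  rfl

lemma aux_fl_refl (x : X) : fl (Path.refl x) = 1 := by
  rfl

lemma aux_fl_assoc {x w z : X} (p : Path x w) (q : Path w z) (r : Path z x) :
    fl (p.trans (q.trans r)) = fl ((p.trans q).trans r) := by
  rw [aux_fl_hom, aux_fl_hom, auxPq_trans, auxPq_trans, auxPq_trans, auxPq_trans, Category.assoc]

lemma aux_fl_eq_mul {x y : X} (a b c : Path x y) :
    fl (a.trans c.symm) = fl (b.trans c.symm) * fl (a.trans b.symm) := by
  show (fl (a.trans c.symm) : FundamentalGroupoid.mk x ⟶ FundamentalGroupoid.mk x) =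
    (fl (a.trans b.symm) : FundamentalGroupoid.mk x ⟶ FundamentalGroupoid.mk x) ≫
      (fl (b.trans c.symm) : FundamentalGroupoid.mk x ⟶ FundamentalGroupoid.mk x)
  rw [aux_fl_hom, aux_fl_hom, aux_fl_hom, auxPq_trans, auxPq_trans, auxPq_trans,
    auxPq_symm, auxPq_symm]
  simp [Groupoid.inv_eq_inv]

lemma aux_fl_self {x y : X} (a : Path x y) : fl (a.trans a.symm) = 1 :=
  left_eq_mul.mp (aux_fl_eq_mul a a a)

lemma aux_fl_rev {x y : X} (a b : Path x y) :
    fl (b.trans a.symm) = (fl (a.trans b.symm))⁻¹ :=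
  eq_inv_of_mul_eq_one_left ((aux_fl_eq_mul a b a).symm.trans (aux_fl_self a))

lemma aux_mk_of_rel {x₀ : X} {H : Subgroup (FundamentalGroup X x₀)} {y : X}
    (a b : Path x₀ y) (h : fl (a.trans b.symm) ∈ H) :
    mkX x₀ (loopMem x₀ H) ⟨y, a⟩ = mkX x₀ (loopMem x₀ H) ⟨y, b⟩ :=
  Quot.sound ⟨rfl, h⟩

lemma aux_equiv (x₀ : X) (H : Subgroup (FundamentalGroup X x₀)) :
    Equivalence (HRel x₀ (loopMem x₀ H)) := by
  constructor
  · rintro ⟨t, p⟩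
    refine ⟨rfl, ?_⟩
    show fl (p.trans p.symm) ∈ H
    rw [aux_fl_self]; exact H.one_mem
  · rintro ⟨t₁, p₁⟩ ⟨t₂, p₂⟩ ⟨h, hm⟩
    have h' : t₁ = t₂ := h
    subst h'
    refine ⟨rfl, ?_⟩
    show fl (p₂.trans p₁.symm) ∈ H
    rw [aux_fl_rev]
    exact H.inv_mem hm
  · rintro ⟨t₁, p₁⟩ ⟨t₂, p₂⟩ ⟨t₃, p₃⟩ ⟨h12, hm12⟩ ⟨h23, hm23⟩
    have h12' : t₁ = t₂ := h12
    subst h12'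
    have h23' : t₁ = t₃ := h23
    subst h23'
    refine ⟨rfl, ?_⟩
    show fl (p₁.trans p₃.symm) ∈ H
    rw [aux_fl_eq_mul p₁ p₂ p₃]
    exact H.mul_mem hm23 hm12

lemma aux_rel_of_mk_eq {x₀ : X} {H : Subgroup (FundamentalGroup X x₀)} {y : X}
    (a b : Path x₀ y)
    (h : mkX x₀ (loopMem x₀ H) ⟨y, a⟩ = mkX x₀ (loopMem x₀ H) ⟨y, b⟩) :
    fl (a.trans b.symm) ∈ H := by
  obtain ⟨e, hm⟩ := ((aux_equiv x₀ H).eqvGen_iff).mp (Quot.eq.mp h)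
  exact hm

lemma aux_mk_refl {x₀ : X} (H : Subgroup (FundamentalGroup X x₀)) (a : Path x₀ x₀) :
    mkX x₀ (loopMem x₀ H) ⟨x₀, a⟩ =
      mkX x₀ (loopMem x₀ H) ⟨x₀, a.trans (Path.refl x₀)⟩ := by
  apply aux_mk_of_rel
  have h : fl (a.trans ((a.trans (Path.refl x₀)).symm)) = 1 := by
    simp only [aux_fl_trans, aux_fl_symm, aux_fl_refl]; group
  rw [h]; exact H.one_mem

lemma aux_fib_exists {x : X} {P : Path x x → Prop} {y : X} (q : Fib x P y) :
    ∃ δ : Path x y, q = mkFib x P δ := by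
  obtain ⟨q, hq⟩ := q
  induction q using Quot.ind with
  | _ α =>
    obtain ⟨t, p⟩ := α
    have ht : t = y := hq
    subst ht
    exact ⟨p, rfl⟩

lemma aux_isOpen_whBasic (x : X) (P : Path x x → Prop) (α : PPath X x) (U : Set X)
    (hU : IsOpen U) (hα : α.target ∈ U) : IsOpen (whBasic x P α U) :=
  isOpen_generateFrom_of_mem ⟨α, U, hU, hα, rfl⟩

end Aux

/-- Let `H` be a normal subgroup of `π₁(X, x₀)` and let `X` be `H`-SLT at
`x₀`. Then the fiber `(p_H⁻¹(x₀))^wh` is a topological group: both the concatenation map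
and the inversion map are continuous. -/
theorem statement1 {X : Type u} [TopologicalSpace X] [PathConnectedSpace X] (x₀ : X)
    (H : Subgroup (FundamentalGroup X x₀)) (hH : H.Normal) (hslt : IsHSLTAt x₀ H) :
    (∀ mul : Fib x₀ (loopMem x₀ H) x₀ → Fib x₀ (loopMem x₀ H) x₀ → Fib x₀ (loopMem x₀ H) x₀,
      (∀ a b : Path x₀ x₀,
        mul (mkFib x₀ (loopMem x₀ H) a) (mkFib x₀ (loopMem x₀ H) b) =
          mkFib x₀ (loopMem x₀ H) (a.trans b)) →
      Continuous fun q : Fib x₀ (loopMem x₀ H) x₀ × Fib x₀ (loopMem x₀ H) x₀ =>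
        mul q.1 q.2) ∧
    (∀ inv : Fib x₀ (loopMem x₀ H) x₀ → Fib x₀ (loopMem x₀ H) x₀,
      (∀ γ : Path x₀ x₀,
        inv (mkFib x₀ (loopMem x₀ H) γ) = mkFib x₀ (loopMem x₀ H) γ.symm) →
      Continuous inv) := by
  constructor
  · intro mul hmul
    apply continuous_induced_rng.mpr
    apply continuous_generateFrom_iff.mpr
    rintro S ⟨α, U, hU, hαU, rfl⟩
    rw [isOpen_iff_mem_nhds]
    rintro ⟨q₁, q₂⟩ hq
    obtain ⟨a, rfl⟩ := aux_fib_exists q₁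
    obtain ⟨b, rfl⟩ := aux_fib_exists q₂
    have hq' : (mul (mkFib x₀ (loopMem x₀ H) a) (mkFib x₀ (loopMem x₀ H) b)).1
        ∈ whBasic x₀ (loopMem x₀ H) α U := hq
    rw [hmul] at hq'
    obtain ⟨y, β, hβU, heq⟩ := hq'
    have hy : x₀ = y := congrArg (endpt x₀ (loopMem x₀ H)) heq
    subst hy
    have h₄ : fl ((a.trans b).trans (α.path.trans β).symm) ∈ H :=
      aux_rel_of_mk_eq _ _ heq
    have hx₀U : x₀ ∈ U := hβU ⟨1, β.target⟩
    obtain ⟨V, hVo, hx₀V, hV⟩ := hslt x₀ b.symm U hU hx₀U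
    have hN₁ : IsOpen (Subtype.val ⁻¹'
        whBasic x₀ (loopMem x₀ H) ⟨x₀, a⟩ V : Set (Fib x₀ (loopMem x₀ H) x₀)) :=
      (aux_isOpen_whBasic x₀ _ ⟨x₀, a⟩ V hVo hx₀V).preimage continuous_subtype_val
    have hN₂ : IsOpen (Subtype.val ⁻¹'
        whBasic x₀ (loopMem x₀ H) ⟨x₀, b⟩ U : Set (Fib x₀ (loopMem x₀ H) x₀)) :=
      (aux_isOpen_whBasic x₀ _ ⟨x₀, b⟩ U hU hx₀U).preimage continuous_subtype_val
    refine Filter.mem_of_superset ((hN₁.prod hN₂).mem_nhds ⟨?_, ?_⟩) ?_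
    · exact ⟨x₀, Path.refl x₀,
        by rw [Path.refl_range]; exact singleton_subset_iff.mpr hx₀V, aux_mk_refl H a⟩
    · exact ⟨x₀, Path.refl x₀,
        by rw [Path.refl_range]; exact singleton_subset_iff.mpr hx₀U, aux_mk_refl H b⟩
    · rintro ⟨r₁, r₂⟩ ⟨hr₁, hr₂⟩
      obtain ⟨y₁, β₁, hβ₁V, he₁⟩ := hr₁
      obtain ⟨y₂, β₂, hβ₂U, he₂⟩ := hr₂
      have hy₁ : x₀ = y₁ := by
        have h := r₁.2; rw [he₁] at h; exact h.symm
      subst hy₁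
      have hy₂ : x₀ = y₂ := by
        have h := r₂.2; rw [he₂] at h; exact h.symm
      subst hy₂
      have hr₁' : r₁ = mkFib x₀ (loopMem x₀ H) (a.trans β₁) := Subtype.ext he₁
      have hr₂' : r₂ = mkFib x₀ (loopMem x₀ H) (b.trans β₂) := Subtype.ext he₂
      show (mul r₁ r₂).1 ∈ whBasic x₀ (loopMem x₀ H) α U
      rw [hr₁', hr₂', hmul]
      obtain ⟨γ, hγU, h₃⟩ := hV β₁ hβ₁V
      refine ⟨x₀, β.trans (γ.trans β₂), ?_, ?_⟩
      · rw [Path.trans_range, Path.trans_range]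
        exact union_subset hβU (union_subset hγU hβ₂U)
      · apply aux_mk_of_rel
        have keyeq : fl (((a.trans β₁).trans (b.trans β₂)).trans
              ((α.path.trans (β.trans (γ.trans β₂))).symm))
            = ((fl (α.path.trans β))⁻¹ *
                fl ((b.symm.trans (β₁.trans b.symm.symm)).trans γ.symm) *
                (fl (α.path.trans β))⁻¹⁻¹)
              * fl ((a.trans b).trans ((α.path.trans β)).symm) := by
          simp only [aux_fl_trans, aux_fl_symm]
          rw [aux_fl_assoc]
          simp only [aux_fl_trans]
          group
        rw [keyeq]
        exact H.mul_mem (hH.conj_mem _ h₃ _) h₄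
  · intro inv hinv
    apply continuous_induced_rng.mpr
    apply continuous_generateFrom_iff.mpr
    rintro S ⟨α, U, hU, hαU, rfl⟩
    rw [isOpen_iff_mem_nhds]
    intro q hq
    obtain ⟨c, rfl⟩ := aux_fib_exists q
    have hq' : (inv (mkFib x₀ (loopMem x₀ H) c)).1
        ∈ whBasic x₀ (loopMem x₀ H) α U := hq
    rw [hinv] at hq'
    obtain ⟨y, β, hβU, heq⟩ := hq'
    have hy : x₀ = y := congrArg (endpt x₀ (loopMem x₀ H)) heq
    subst hy
    have h₄ : fl (c.symm.trans (α.path.trans β).symm) ∈ H :=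
      aux_rel_of_mk_eq _ _ heq
    have hx₀U : x₀ ∈ U := hβU ⟨1, β.target⟩
    obtain ⟨V, hVo, hx₀V, hV⟩ := hslt x₀ c U hU hx₀U
    have hN : IsOpen (Subtype.val ⁻¹'
        whBasic x₀ (loopMem x₀ H) ⟨x₀, c⟩ V : Set (Fib x₀ (loopMem x₀ H) x₀)) :=
      (aux_isOpen_whBasic x₀ _ ⟨x₀, c⟩ V hVo hx₀V).preimage continuous_subtype_val
    refine Filter.mem_of_superset (hN.mem_nhds ?_) ?_
    · exact ⟨x₀, Path.refl x₀,
        by rw [Path.refl_range]; exact singleton_subset_iff.mpr hx₀V, aux_mk_refl H c⟩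
    · rintro r hr
      obtain ⟨y₁, β₁, hβ₁V, he₁⟩ := hr
      have hy₁ : x₀ = y₁ := by
        have h := r.2; rw [he₁] at h; exact h.symm
      subst hy₁
      have hr' : r = mkFib x₀ (loopMem x₀ H) (c.trans β₁) := Subtype.ext he₁
      show (inv r).1 ∈ whBasic x₀ (loopMem x₀ H) α U
      rw [hr', hinv]
      obtain ⟨γ, hγU, h₃⟩ := hV β₁.symm (by rw [Path.symm_range]; exact hβ₁V)
      refine ⟨x₀, β.trans γ, ?_, ?_⟩
      · rw [Path.trans_range]
        exact union_subset hβU hγU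
      · apply aux_mk_of_rel
        have keyeq : fl ((c.trans β₁).symm.trans ((α.path.trans (β.trans γ)).symm))
            = ((fl (α.path.trans β))⁻¹ *
                fl ((c.trans (β₁.symm.trans c.symm)).trans γ.symm) *
                (fl (α.path.trans β))⁻¹⁻¹)
              * fl (c.symm.trans ((α.path.trans β)).symm) := by
          simp only [aux_fl_trans, aux_fl_symm]
          rw [aux_fl_assoc]
          simp only [aux_fl_trans, aux_fl_symm]
          group
        rw [keyeq]
        exact H.mul_mem (hH.conj_mem _ h₃ _) h₄

end SLTF
end

section
/- Let X be an SLT space. Then X is homotopically Hausdorff (i.e., homotopically Hausdorff relative to the trivial subgroup) if and only if π₁^wh(X, x₀) is a T₀ space. -/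
open Set TopologicalSpace unitInterval

universe u

namespace SLTF

attribute [local instance] Path.Homotopic.setoid

variable {X : Type u} [TopologicalSpace X]

section Aux

variable {x : X}

noncomputable def arr (a : FundamentalGroup X x) :
    FundamentalGroupoid.mk x ⟶ FundamentalGroupoid.mk x :=
  @FundamentalGroup.toArrow X _ x a

lemma arr_injective {a b : FundamentalGroup X x} (h : arr a = arr b) : a = b :=
  h

lemma pmul_eq (a b : FundamentalGroup X x) : pmul a b = b * a := arr_injective rfl

lemma fl_refl_s4 : fl (Path.refl x) = (1 : FundamentalGroup X x) := arr_injective rfl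

lemma fl_trans_s4 (γ δ : Path x x) : fl (γ.trans δ) = fl δ * fl γ := by
  apply arr_injective
  show (⟦γ.trans δ⟧ : Path.Homotopic.Quotient x x) = Path.Homotopic.Quotient.trans ⟦γ⟧ ⟦δ⟧
  rfl

lemma fl_homotopic_s4 {γ δ : Path x x} (h : γ.Homotopic δ) : fl γ = fl δ := by
  apply arr_injective
  show (⟦γ⟧ : Path.Homotopic.Quotient x x) = ⟦δ⟧
  exact Quotient.sound h

lemma fl_trans_symm (γ : Path x x) : fl (γ.trans γ.symm) = 1 := by
  rw [fl_homotopic_s4 (Path.Homotopic.symm ⟨Path.Homotopy.reflTransSymm γ⟩), fl_refl_s4]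

lemma fl_conj_refl (γ : Path x x) :
    fl ((Path.refl x).trans (γ.trans (Path.refl x).symm)) = fl γ := by
  rw [Path.refl_symm, fl_trans_s4, fl_trans_s4, fl_refl_s4, mul_one, one_mul]

lemma wh_nbhd {O : Set (FundamentalGroup X x)}
    (hO : TopologicalSpace.GenerateOpen
      { S | ∃ (a : FundamentalGroup X x) (U : Set X), IsOpen U ∧ x ∈ U ∧
          S = { b | ∃ γ : Path x x, range ⇑γ ⊆ U ∧ b = pmul a (fl γ) } } O) :
    ∀ b ∈ O, ∃ U : Set X, IsOpen U ∧ x ∈ U ∧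
      ∀ γ : Path x x, range ⇑γ ⊆ U → pmul b (fl γ) ∈ O := by
  induction hO with
  | basic S hS =>
      obtain ⟨a, U, hU, hxU, rfl⟩ := hS
      rintro b ⟨γ₀, hγ₀, rfl⟩
      refine ⟨U, hU, hxU, fun δ hδ => ⟨γ₀.trans δ, ?_, ?_⟩⟩
      · rw [Path.trans_range]; exact union_subset hγ₀ hδ
      · rw [pmul_eq, pmul_eq, pmul_eq, fl_trans_s4, mul_assoc]
  | univ => exact fun b _ => ⟨univ, isOpen_univ, mem_univ _, fun _ _ => mem_univ _⟩
  | inter s t _ _ ihs iht =>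
      intro b hb
      obtain ⟨U, hU, hxU, hU'⟩ := ihs b hb.1
      obtain ⟨V, hV, hxV, hV'⟩ := iht b hb.2
      exact ⟨U ∩ V, hU.inter hV, ⟨hxU, hxV⟩, fun γ hγ =>
        ⟨hU' γ (hγ.trans inter_subset_left), hV' γ (hγ.trans inter_subset_right)⟩⟩
  | sUnion S _ ih =>
      rintro b ⟨s, hsS, hbs⟩
      obtain ⟨U, hU, hxU, h⟩ := ih s hsS b hbs
      exact ⟨U, hU, hxU, fun γ hγ => ⟨s, hsS, h γ hγ⟩⟩

end Aux

/-- Let `X` be an SLT space. Then `X` is homotopically Hausdorff (i.e.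
homotopically Hausdorff relative to the trivial subgroup) if and only if `π₁^wh(X, x₀)`
is a `T₀` space. -/
theorem statement4 {X : Type u} [TopologicalSpace X] [PathConnectedSpace X] (x₀ : X)
    (hslt : IsSLT X) :
    HomHausdorffRel x₀ (⊥ : Subgroup (FundamentalGroup X x₀)) ↔
      @T0Space (FundamentalGroup X x₀) (whPi1 x₀) := by
  constructor
  · intro hh
    refine (@t0Space_iff_exists_isOpen_xor'_mem (FundamentalGroup X x₀) (whPi1 x₀)).mpr
      fun a b hab => ?_
    have hg : b * a⁻¹ ∉ (⊥ : Subgroup (FundamentalGroup X x₀)) := by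
      rw [Subgroup.mem_bot]
      intro h
      exact hab (mul_inv_eq_one.mp h).symm
    obtain ⟨U, hU, hx₀U, hU'⟩ := hh x₀ (Path.refl x₀) (b * a⁻¹) hg
    refine ⟨{c | ∃ γ : Path x₀ x₀, range ⇑γ ⊆ U ∧ c = pmul a (fl γ)}, ?_, Or.inl ⟨?_, ?_⟩⟩
    · exact TopologicalSpace.GenerateOpen.basic _ ⟨a, U, hU, hx₀U, rfl⟩
    · exact ⟨Path.refl x₀, by rw [Path.refl_range]; exact singleton_subset_iff.mpr hx₀U,
        by rw [fl_refl_s4, pmul_eq, one_mul]⟩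
    · rintro ⟨γ, hγU, hbeq⟩
      refine hU' γ hγU ⟨1, Subgroup.one_mem _, ?_⟩
      rw [fl_conj_refl, pmul_eq, mul_one]
      rw [pmul_eq] at hbeq
      rw [hbeq, mul_inv_cancel_right]
  · intro ht y α g hg
    rw [Subgroup.mem_bot] at hg
    obtain ⟨O, hO, hxor⟩ :=
      (@t0Space_iff_exists_isOpen_xor'_mem (FundamentalGroup X x₀) (whPi1 x₀)).mp ht
        (show (1 : FundamentalGroup X x₀) ≠ g from fun h => hg h.symm)
    have hO' : TopologicalSpace.GenerateOpen _ O := hO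
    have key : ∃ W : Set X, IsOpen W ∧ x₀ ∈ W ∧
        ∀ γ : Path x₀ x₀, range ⇑γ ⊆ W → fl γ ≠ g := by
      rcases hxor with ⟨h1O, hgO⟩ | ⟨hgO, h1O⟩
      · obtain ⟨U, hU, hxU, hcl⟩ := wh_nbhd hO' 1 h1O
        refine ⟨U, hU, hxU, fun γ hγ hEq => hgO ?_⟩
        have := hcl γ hγ
        rwa [pmul_eq, mul_one, hEq] at this
      · obtain ⟨U, hU, hxU, hcl⟩ := wh_nbhd hO' g hgO
        refine ⟨U, hU, hxU, fun γ hγ hEq => h1O ?_⟩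
        have := hcl γ.symm (by rwa [Path.symm_range])
        rwa [pmul_eq, ← hEq, ← fl_trans_s4, fl_trans_symm] at this
    obtain ⟨W, hW, hx₀W, hWg⟩ := key
    obtain ⟨V, hV, hyV, hVW⟩ := hslt x₀ y α W hW hx₀W
    refine ⟨V, hV, hyV, fun β hβ => ?_⟩
    rintro ⟨h, hh, hEq⟩
    rw [Subgroup.mem_bot] at hh
    subst hh
    obtain ⟨γ, hγW, hhom⟩ := hVW β hβ
    refine hWg γ hγW ?_
    rw [← fl_homotopic_s4 hhom, hEq, pmul_eq, mul_one]


end SLTF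
end
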